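/- (Necessity form of Theorem 3, combined with Proposition 2.) For every optimal solution (ℓ*, d*) of problem (P1.1) there exist real numbers ω_1 ≤ ω_2 ≤ … ≤ ω_N such that for every i ∈ {1,…,N}: ℓ*_i = τ·√(η h'_i · max(ω_i, 0)/(3 ζ C³)) and d*_i = τ B · log₂( max( ω_i · B η h'_i g_i/(σ² ln 2), 1 ) ), and such that for every i ∈ {1,…,N−1} with ω_i < ω_{i+1} the task-causality constraint at slot i is tight: Σ_{j=1}^i (ℓ*_j + d*_j) = Σ_{j=1}^i A_j. -/

import Mathlib

open Finset

private lemma sum_upd1 (s : Finset ℕ) (G : ℕ → ℝ → ℝ) (f : ℕ → ℝ) (u : ℕ) (x : ℝ) :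
    ∑ j ∈ s, G j (Function.update f u x j)
      = ∑ j ∈ s, G j (f j) + (if u ∈ s then G u x - G u (f u) else 0) := by
  by_cases hu : u ∈ s
  · rw [if_pos hu, ← Finset.add_sum_erase s _ hu,
      ← Finset.add_sum_erase s (fun j => G j (f j)) hu, Function.update_self]
    have : ∑ j ∈ s.erase u, G j (Function.update f u x j) = ∑ j ∈ s.erase u, G j (f j) :=
      Finset.sum_congr rfl (fun j hj => by
        rw [Function.update_of_ne (Finset.ne_of_mem_erase hj)])
    rw [this]; ring
  · rw [if_neg hu, add_zero]
    exact Finset.sum_congr rfl (fun j hj => by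
      rw [Function.update_of_ne (by rintro rfl; exact hu hj)])

private lemma sum_upd2 (s : Finset ℕ) (G : ℕ → ℝ → ℝ) (f : ℕ → ℝ) (u v : ℕ) (x y : ℝ)
    (huv : u ≠ v) :
    ∑ j ∈ s, G j (Function.update (Function.update f u x) v y j)
      = ∑ j ∈ s, G j (f j) + (if u ∈ s then G u x - G u (f u) else 0)
        + (if v ∈ s then G v y - G v (f v) else 0) := by
  rw [sum_upd1 s G _ v y, sum_upd1 s G f u x, Function.update_of_ne (Ne.symm huv)]


private lemma exp_quad_upper {x : ℝ} (h0 : 0 ≤ x) (h1 : x ≤ 1) :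
    Real.exp x ≤ 1 + x + 3 * x ^ 2 := by
  have h2 : Real.exp x ≤ Real.exp 1 := Real.exp_le_exp.mpr h1
  have h3 : Real.exp 1 ≤ 3 := by have := Real.exp_one_lt_d9; linarith
  have h6 := Real.add_one_le_exp (-x)
  rw [Real.exp_neg] at h6
  have hx := Real.exp_pos x
  have h5 : (1 - x) * Real.exp x ≤ 1 := by
    calc (1-x) * Real.exp x ≤ (Real.exp x)⁻¹ * Real.exp x :=
          mul_le_mul_of_nonneg_right (by linarith) hx.le
      _ = 1 := inv_mul_cancel₀ (ne_of_gt hx)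
  nlinarith [mul_nonneg h0 hx.le]

private lemma exp_neg_quad_upper {x : ℝ} (h0 : 0 ≤ x) :
    Real.exp (-x) ≤ 1 - x + x ^ 2 := by
  have h6 := Real.add_one_le_exp x
  have hx := Real.exp_pos (-x)
  have hmul : Real.exp x * Real.exp (-x) = 1 := by rw [← Real.exp_add]; simp
  nlinarith [sq_nonneg x, mul_nonneg (mul_nonneg h0 h0) h0]

private lemma exp_sub_exp_ge (b t : ℝ) :
    t * Real.exp (b - t) ≤ Real.exp b - Real.exp (b - t) := by
  have hb : Real.exp b = Real.exp (b - t) * Real.exp t := by rw [← Real.exp_add]; ring_nf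
  nlinarith [Real.exp_pos (b-t), Real.add_one_le_exp t]

-- marginal inequality: local-compute marginal ≤ offloading marginal (always)
private lemma slotCi (c e2 L l dd : ℝ) (hc : 0 < c) (he2 : 0 < e2) (hL : 0 < L)
    (hl : 0 ≤ l) (hd : 0 ≤ dd)
    (key : ∀ x y : ℝ, 0 ≤ x → 0 ≤ y → x + y = l + dd →
      c * l ^ 3 + e2 * Real.exp (L * dd) ≤ c * x ^ 3 + e2 * Real.exp (L * y)) :
    3 * c * l ^ 2 ≤ e2 * L * Real.exp (L * dd) := by
  by_contra hcon
  push_neg at hcon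
  have hD : 0 < Real.exp (L * dd) := Real.exp_pos _
  have hlpos : 0 < l := by
    rcases hl.lt_or_eq with h | h
    · exact h
    · exfalso; rw [← h] at hcon; nlinarith [mul_pos (mul_pos he2 hL) hD]
  set D := Real.exp (L * dd) with hDdef
  set δ : ℝ := 3 * c * l ^ 2 - e2 * L * D with hδdef
  have hδ : 0 < δ := by simp only [hδdef]; linarith
  set K : ℝ := 3 * c * l + 3 * e2 * D * L ^ 2 + 1 with hKdef
  have hK : 0 < K := by positivity
  set ε : ℝ := min l (min (1 / L) (δ / K)) with hεdef
  have hε : 0 < ε := lt_min hlpos (lt_min (by positivity) (by positivity))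
  have hε1 : ε ≤ l := min_le_left _ _
  have hε2 : L * ε ≤ 1 := by
    have h7 : ε ≤ 1 / L := le_trans (min_le_right _ _) (min_le_left _ _)
    rw [le_div_iff₀ hL] at h7; linarith
  have hε3 : K * ε ≤ δ := by
    have h7 : ε ≤ δ / K := le_trans (min_le_right _ _) (min_le_right _ _)
    rw [le_div_iff₀ hK] at h7; linarith
  have hk := key (l - ε) (dd + ε) (by linarith) (by linarith) (by ring)
  rw [show L * (dd + ε) = L * dd + L * ε by ring, Real.exp_add, ← hDdef] at hk
  have hq := exp_quad_upper (mul_nonneg hL.le hε.le) hε2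
  have hq2 : e2 * (D * Real.exp (L * ε)) ≤ e2 * (D * (1 + L * ε + 3 * (L*ε)^2)) := by
    apply mul_le_mul_of_nonneg_left _ he2.le
    exact mul_le_mul_of_nonneg_left hq hD.le
  have hcube : 0 < ε ^ 3 := by positivity
  nlinarith [mul_pos hε hε, mul_le_mul_of_nonneg_right hε3 hε.le]

-- offloading marginal ≤ local marginal when d > 0
private lemma slotCii (c e2 L l dd : ℝ) (hc : 0 < c) (he2 : 0 < e2) (hL : 0 < L)
    (hl : 0 ≤ l) (hd : 0 < dd)
    (key : ∀ x y : ℝ, 0 ≤ x → 0 ≤ y → x + y = l + dd →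
      c * l ^ 3 + e2 * Real.exp (L * dd) ≤ c * x ^ 3 + e2 * Real.exp (L * y)) :
    e2 * L * Real.exp (L * dd) ≤ 3 * c * l ^ 2 := by
  by_contra hcon
  push_neg at hcon
  have hD : 0 < Real.exp (L * dd) := Real.exp_pos _
  set D := Real.exp (L * dd) with hDdef
  set δ : ℝ := e2 * L * D - 3 * c * l ^ 2 with hδdef
  have hδ : 0 < δ := by simp only [hδdef]; linarith
  set K : ℝ := 3 * c * l + e2 * D * L ^ 2 + c + 1 with hKdef
  have hK : 0 < K := by positivity
  set ε : ℝ := min dd (min 1 (δ / K)) with hεdef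
  have hε : 0 < ε := lt_min hd (lt_min one_pos (by positivity))
  have hε1 : ε ≤ dd := min_le_left _ _
  have hε2 : ε ≤ 1 := le_trans (min_le_right _ _) (min_le_left _ _)
  have hε3 : K * ε ≤ δ := by
    have h7 : ε ≤ δ / K := le_trans (min_le_right _ _) (min_le_right _ _)
    rw [le_div_iff₀ hK] at h7; linarith
  have hk := key (l + ε) (dd - ε) (by linarith) (by linarith) (by ring)
  rw [show L * (dd - ε) = L * dd + -(L * ε) by ring, Real.exp_add, ← hDdef] at hk
  have hq := exp_neg_quad_upper (mul_nonneg hL.le hε.le)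
  have hq2 : e2 * (D * Real.exp (-(L * ε))) ≤ e2 * (D * (1 - L * ε + (L*ε)^2)) := by
    apply mul_le_mul_of_nonneg_left _ he2.le
    exact mul_le_mul_of_nonneg_left hq hD.le
  nlinarith [mul_pos hε hε, mul_le_mul_of_nonneg_right hε3 hε.le,
    mul_pos (mul_pos hε hε) hε, mul_le_mul_of_nonneg_right hε2 (mul_pos hε hε).le]

-- inter-slot: marginal at "sending" slot ≤ marginal at "receiving" slot
private lemma shiftlem (c A1 A2 l1 l2 bnd : ℝ) (hc : 0 < c) (hA1 : 0 < A1) (hA2 : 0 < A2)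
    (hl2 : 0 ≤ l2) (hbnd : 0 < bnd) (hbl : bnd ≤ l1)
    (key : ∀ ε : ℝ, 0 ≤ ε → ε ≤ bnd →
      A1 * (c * l1 ^ 3) + A2 * (c * l2 ^ 3)
        ≤ A1 * (c * (l1 - ε) ^ 3) + A2 * (c * (l2 + ε) ^ 3)) :
    3 * c * A1 * l1 ^ 2 ≤ 3 * c * A2 * l2 ^ 2 := by
  by_contra hcon
  push_neg at hcon
  have hl1 : 0 < l1 := lt_of_lt_of_le hbnd hbl
  set δ : ℝ := 3 * c * A1 * l1 ^ 2 - 3 * c * A2 * l2 ^ 2 with hδdef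
  have hδ : 0 < δ := by simp only [hδdef]; linarith
  set K : ℝ := 3 * c * A1 * l1 + 3 * c * A2 * l2 + c * A1 + c * A2 + 1 with hKdef
  have hK : 0 < K := by positivity
  set ε : ℝ := min bnd (min 1 (δ / K)) with hεdef
  have hε : 0 < ε := lt_min hbnd (lt_min one_pos (by positivity))
  have hε1 : ε ≤ bnd := min_le_left _ _
  have hε2 : ε ≤ 1 := le_trans (min_le_right _ _) (min_le_left _ _)
  have hε3 : K * ε ≤ δ := by
    have h7 : ε ≤ δ / K := le_trans (min_le_right _ _) (min_le_right _ _)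
    rw [le_div_iff₀ hK] at h7; linarith
  have hk := key ε hε.le hε1
  have hid : A1 * (c * (l1 - ε) ^ 3) + A2 * (c * (l2 + ε) ^ 3)
      - (A1 * (c * l1 ^ 3) + A2 * (c * l2 ^ 3))
      = -δ * ε + (3 * c * A1 * l1 + 3 * c * A2 * l2) * ε ^ 2 + c * (A2 - A1) * ε ^ 3 := by
    simp only [hδdef]; ring
  have h8 : 0 ≤ -δ * ε + (3 * c * A1 * l1 + 3 * c * A2 * l2) * ε ^ 2
      + c * (A2 - A1) * ε ^ 3 := by linarith
  have hpow : ε ^ 3 ≤ ε ^ 2 := pow_le_pow_of_le_one hε.le hε2 (by norm_num)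
  have h9 : c * A2 * ε ^ 3 ≤ c * A2 * ε ^ 2 :=
    mul_le_mul_of_nonneg_left hpow (by positivity)
  have h10 : (0:ℝ) ≤ c * A1 * ε ^ 3 := by positivity
  have h11 : 0 ≤ -δ * ε + (3 * c * A1 * l1 + 3 * c * A2 * l2 + c * A2) * ε ^ 2 := by nlinarith
  have h12 : K * ε * ε ≤ δ * ε := mul_le_mul_of_nonneg_right hε3 hε.le
  have h13 : K * ε * ε = (3 * c * A1 * l1 + 3 * c * A2 * l2 + c * A1 + c * A2 + 1) * ε ^ 2 := by
    simp only [hKdef]; ring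
  nlinarith [mul_pos hε hε]

/-- Local-computing energy: `E_loc(x) = ζ C³ x³ / τ²`. -/
noncomputable def Eloc (ζ C τ x : ℝ) : ℝ := ζ * C ^ 3 * x ^ 3 / τ ^ 2

/-- Offloading energy at a slot with channel gain `g`: `E_off(x) = (τσ²/g)(2^{x/(τB)} − 1)`. -/
noncomputable def Eoff (τ σ2 g B x : ℝ) : ℝ := τ * σ2 / g * ((2 : ℝ) ^ (x / (τ * B)) - 1)

/-- Feasibility for problem (P1.1): nonnegativity, task causality, task completion. -/
def FeasP11 (N : ℕ) (A ℓ d : ℕ → ℝ) : Prop :=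
  (∀ i ∈ Finset.Icc 1 N, 0 ≤ ℓ i ∧ 0 ≤ d i) ∧
  (∀ i ∈ Finset.Icc 1 (N - 1),
    ∑ j ∈ Finset.Icc 1 i, (ℓ j + d j) ≤ ∑ j ∈ Finset.Icc 1 i, A j) ∧
  ∑ j ∈ Finset.Icc 1 N, (ℓ j + d j) = ∑ j ∈ Finset.Icc 1 N, A j

/-- Necessity form of Theorem 3 (with Proposition 2): every optimal solution of (P1.1)
is of the stated closed form for some nondecreasing computation levels `ω`, and the
task-causality constraint is tight at every slot where `ω` strictly increases. -/
theorem stmt_15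
    (N : ℕ) (hN : 0 < N)
    (τ η ζ C σ2 B : ℝ)
    (hτ : 0 < τ) (hη : 0 < η) (hζ : 0 < ζ) (hC : 0 < C) (hσ2 : 0 < σ2) (hB : 0 < B)
    (h g : ℕ → ℝ)
    (hhpos : ∀ i ∈ Finset.Icc 1 N, 0 < h i) (hgpos : ∀ i ∈ Finset.Icc 1 N, 0 < g i)
    (h' : ℕ → ℝ)
    (hh' : ∀ i ∈ Finset.Icc 1 N,
      (∃ j ∈ Finset.Icc 1 i, h' i = h j) ∧ ∀ j ∈ Finset.Icc 1 i, h j ≤ h' i)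
    (A : ℕ → ℝ) (hA : ∀ i ∈ Finset.Icc 1 N, 0 ≤ A i)
    (ℓ d : ℕ → ℝ)
    (hfeas : FeasP11 N A ℓ d)
    (hopt : ∀ ℓ' d' : ℕ → ℝ, FeasP11 N A ℓ' d' →
      ∑ i ∈ Finset.Icc 1 N, 1 / (η * h' i) * (Eloc ζ C τ (ℓ i) + Eoff τ σ2 (g i) B (d i))
        ≤ ∑ i ∈ Finset.Icc 1 N, 1 / (η * h' i) * (Eloc ζ C τ (ℓ' i) + Eoff τ σ2 (g i) B (d' i))) :
    ∃ ω : ℕ → ℝ,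
      (∀ i ∈ Finset.Icc 1 (N - 1), ω i ≤ ω (i + 1)) ∧
      (∀ i ∈ Finset.Icc 1 N,
        ℓ i = τ * Real.sqrt (η * h' i * max (ω i) 0 / (3 * ζ * C ^ 3)) ∧
        d i = τ * B * Real.logb 2 (max (ω i * (B * η * h' i * g i) / (σ2 * Real.log 2)) 1)) ∧
      (∀ i ∈ Finset.Icc 1 (N - 1), ω i < ω (i + 1) →
        ∑ j ∈ Finset.Icc 1 i, (ℓ j + d j) = ∑ j ∈ Finset.Icc 1 i, A j) := by
  obtain ⟨hnn, hcaus, hcomp⟩ := hfeas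
  have hh'pos : ∀ i ∈ Finset.Icc 1 N, 0 < h' i := by
    intro i hi
    obtain ⟨⟨j, hj, hje⟩, -⟩ := hh' i hi
    rw [hje]
    rw [Finset.mem_Icc] at hj hi
    exact hhpos j (Finset.mem_Icc.mpr ⟨hj.1, le_trans hj.2 hi.2⟩)
  set G : ℕ → ℝ → ℝ := fun j t => 1 / (η * h' j) * Eloc ζ C τ t with hG
  set H : ℕ → ℝ → ℝ := fun j t => 1 / (η * h' j) * Eoff τ σ2 (g j) B t with hH
  have hsplit : ∀ (l' d' : ℕ → ℝ),
      ∑ i ∈ Finset.Icc 1 N, 1 / (η * h' i) * (Eloc ζ C τ (l' i) + Eoff τ σ2 (g i) B (d' i))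
        = ∑ i ∈ Finset.Icc 1 N, G i (l' i) + ∑ i ∈ Finset.Icc 1 N, H i (d' i) := by
    intro l' d'
    rw [← Finset.sum_add_distrib]
    exact Finset.sum_congr rfl fun i _ => by simp only [hG, hH]; ring
  -- within-slot perturbation
  have pwithin : ∀ i ∈ Finset.Icc 1 N, ∀ x y : ℝ, 0 ≤ x → 0 ≤ y → x + y = ℓ i + d i →
      G i (ℓ i) + H i (d i) ≤ G i x + H i y := by
    intro i hi x y hx hy hxy
    have hfeas' : FeasP11 N A (Function.update ℓ i x) (Function.update d i y) := by
      have hpt : ∀ j, Function.update ℓ i x j + Function.update d i y j = ℓ j + d j := by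
        intro j
        by_cases hji : j = i
        · subst hji; simp only [Function.update_self]; linarith
        · simp only [Function.update_of_ne hji]
      refine ⟨?_, ?_, ?_⟩
      · intro j hj
        by_cases hji : j = i
        · subst hji; simp only [Function.update_self]; exact ⟨hx, hy⟩
        · simp only [Function.update_of_ne hji]; exact hnn j hj
      · intro m hm
        calc ∑ j ∈ Finset.Icc 1 m, (Function.update ℓ i x j + Function.update d i y j)
            = ∑ j ∈ Finset.Icc 1 m, (ℓ j + d j) := Finset.sum_congr rfl fun j _ => hpt j
          _ ≤ _ := hcaus m hm
      · calc ∑ j ∈ Finset.Icc 1 N, (Function.update ℓ i x j + Function.update d i y j)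
            = ∑ j ∈ Finset.Icc 1 N, (ℓ j + d j) := Finset.sum_congr rfl fun j _ => hpt j
          _ = _ := hcomp
    have h1 := hopt _ _ hfeas'
    rw [hsplit ℓ d, hsplit (Function.update ℓ i x) (Function.update d i y),
      sum_upd1 (Finset.Icc 1 N) G ℓ i x, sum_upd1 (Finset.Icc 1 N) H d i y,
      if_pos hi, if_pos hi] at h1
    linarith
  -- forward shift: move ε of local work from slot k to slot k+1
  have pshift : ∀ k ∈ Finset.Icc 1 (N - 1), ∀ ε : ℝ, 0 ≤ ε → ε ≤ ℓ k →
      G k (ℓ k) + G (k + 1) (ℓ (k + 1)) ≤ G k (ℓ k - ε) + G (k + 1) (ℓ (k + 1) + ε) := by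
    intro k hk ε hε hεl
    rw [Finset.mem_Icc] at hk
    have hk1 : 1 ≤ k := hk.1
    have hkN : k + 1 ≤ N := by omega
    set ℓ'' := Function.update (Function.update ℓ k (ℓ k - ε)) (k + 1) (ℓ (k + 1) + ε) with hl''
    have hne : k ≠ k + 1 := by omega
    have hfeas' : FeasP11 N A ℓ'' d := by
      refine ⟨?_, ?_, ?_⟩
      · intro j hj
        rw [hl'']
        by_cases hj1 : j = k + 1
        · rw [hj1, Function.update_self]
          have h5 := hnn (k + 1) (Finset.mem_Icc.mpr ⟨by omega, hkN⟩)
          exact ⟨by linarith [h5.1], h5.2⟩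
        · rw [Function.update_of_ne hj1]
          by_cases hj2 : j = k
          · rw [hj2, Function.update_self]
            have h5 := hnn k (Finset.mem_Icc.mpr ⟨hk1, by omega⟩)
            exact ⟨by linarith [h5.1], h5.2⟩
          · rw [Function.update_of_ne hj2]
            exact hnn j hj
      · intro m hm
        have hq := sum_upd2 (Finset.Icc 1 m) (fun j t => t + d j) ℓ k (k + 1)
          (ℓ k - ε) (ℓ (k + 1) + ε) hne
        beta_reduce at hq
        rw [hl'', hq]
        have hca := hcaus m hm
        by_cases h2 : k + 1 ∈ Finset.Icc 1 m
        · rw [if_pos h2, if_pos (by rw [Finset.mem_Icc] at h2 ⊢; omega)]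
          linarith
        · rw [if_neg h2]
          by_cases h3 : k ∈ Finset.Icc 1 m
          · rw [if_pos h3]; linarith
          · rw [if_neg h3]; linarith
      · have hq := sum_upd2 (Finset.Icc 1 N) (fun j t => t + d j) ℓ k (k + 1)
          (ℓ k - ε) (ℓ (k + 1) + ε) hne
        beta_reduce at hq
        rw [hl'', hq, if_pos (Finset.mem_Icc.mpr ⟨hk1, by omega⟩),
          if_pos (Finset.mem_Icc.mpr ⟨by omega, hkN⟩)]
        rw [← hcomp]; ring
    have h1 := hopt _ _ hfeas'
    rw [hsplit ℓ d, hsplit ℓ'' d, hl'',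
      sum_upd2 (Finset.Icc 1 N) G ℓ k (k + 1) (ℓ k - ε) (ℓ (k + 1) + ε) hne,
      if_pos (Finset.mem_Icc.mpr ⟨hk1, by omega⟩),
      if_pos (Finset.mem_Icc.mpr ⟨by omega, hkN⟩)] at h1
    linarith
  -- backward shift: move ε of local work from slot k+1 to slot k, needs slack at k
  have pback : ∀ k ∈ Finset.Icc 1 (N - 1), ∀ ε : ℝ, 0 ≤ ε → ε ≤ ℓ (k + 1) →
      (∑ j ∈ Finset.Icc 1 k, (ℓ j + d j)) + ε ≤ ∑ j ∈ Finset.Icc 1 k, A j →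
      G k (ℓ k) + G (k + 1) (ℓ (k + 1)) ≤ G k (ℓ k + ε) + G (k + 1) (ℓ (k + 1) - ε) := by
    intro k hk ε hε hεl hslack
    rw [Finset.mem_Icc] at hk
    have hk1 : 1 ≤ k := hk.1
    have hkN : k + 1 ≤ N := by omega
    set ℓ'' := Function.update (Function.update ℓ (k + 1) (ℓ (k + 1) - ε)) k (ℓ k + ε) with hl''
    have hne : k + 1 ≠ k := by omega
    have hfeas' : FeasP11 N A ℓ'' d := by
      refine ⟨?_, ?_, ?_⟩
      · intro j hj
        rw [hl'']
        by_cases hj1 : j = k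
        · rw [hj1, Function.update_self]
          have h5 := hnn k (Finset.mem_Icc.mpr ⟨hk1, by omega⟩)
          exact ⟨by linarith [h5.1], h5.2⟩
        · rw [Function.update_of_ne hj1]
          by_cases hj2 : j = k + 1
          · rw [hj2, Function.update_self]
            have h5 := hnn (k + 1) (Finset.mem_Icc.mpr ⟨by omega, hkN⟩)
            exact ⟨by linarith [h5.1], h5.2⟩
          · rw [Function.update_of_ne hj2]
            exact hnn j hj
      · intro m hm
        have hq := sum_upd2 (Finset.Icc 1 m) (fun j t => t + d j) ℓ (k + 1) k
          (ℓ (k + 1) - ε) (ℓ k + ε) hne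
        beta_reduce at hq
        rw [hl'', hq]
        have hca := hcaus m hm
        by_cases h2 : k + 1 ∈ Finset.Icc 1 m
        · rw [if_pos h2, if_pos (by rw [Finset.mem_Icc] at h2 ⊢; omega)]
          linarith
        · rw [if_neg h2]
          by_cases h3 : k ∈ Finset.Icc 1 m
          · -- m = k exactly (k ≤ m < k+1)
            rw [if_pos h3]
            have hmk : m = k := by rw [Finset.mem_Icc] at h2 h3 hm; omega
            subst hmk
            linarith
          · rw [if_neg h3]; linarith
      · have hq := sum_upd2 (Finset.Icc 1 N) (fun j t => t + d j) ℓ (k + 1) k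
          (ℓ (k + 1) - ε) (ℓ k + ε) hne
        beta_reduce at hq
        rw [hl'', hq, if_pos (Finset.mem_Icc.mpr ⟨by omega, hkN⟩),
          if_pos (Finset.mem_Icc.mpr ⟨hk1, by omega⟩)]
        rw [← hcomp]; ring
    have h1 := hopt _ _ hfeas'
    rw [hsplit ℓ d, hsplit ℓ'' d, hl'',
      sum_upd2 (Finset.Icc 1 N) G ℓ (k + 1) k (ℓ (k + 1) - ε) (ℓ k + ε) hne,
      if_pos (Finset.mem_Icc.mpr ⟨by omega, hkN⟩),
      if_pos (Finset.mem_Icc.mpr ⟨hk1, by omega⟩)] at h1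
    linarith

  -- basic constants
  have hlog2 : 0 < Real.log 2 := Real.log_pos one_lt_two
  set L : ℝ := Real.log 2 / (τ * B) with hLdef
  have hL : 0 < L := by positivity
  set c : ℝ := ζ * C ^ 3 / τ ^ 2 with hcdef
  have hc : 0 < c := by positivity
  have hGeq : ∀ j t, G j t = 1 / (η * h' j) * (c * t ^ 3) := by
    intro j t; simp only [hG, Eloc, hcdef]; ring
  have hHeq : ∀ j t, H j t = 1 / (η * h' j) * (τ * σ2 / g j * (Real.exp (L * t) - 1)) := by
    intro j t
    simp only [hH, Eoff]
    rw [show (2:ℝ) ^ (t / (τ * B)) = Real.exp (L * t) by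
      rw [Real.rpow_def_of_pos (by norm_num : (0:ℝ) < 2), hLdef]; ring_nf]
  have key : ∀ i ∈ Finset.Icc 1 N, ∀ x y : ℝ, 0 ≤ x → 0 ≤ y → x + y = ℓ i + d i →
      c * (ℓ i) ^ 3 + τ * σ2 / g i * Real.exp (L * d i)
        ≤ c * x ^ 3 + τ * σ2 / g i * Real.exp (L * y) := by
    intro i hi x y hx hy hxy
    have h1 := pwithin i hi x y hx hy hxy
    rw [hGeq, hGeq, hHeq, hHeq] at h1
    have ha : 0 < 1 / (η * h' i) := by
      have := hh'pos i hi; positivity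
    rw [← mul_add, ← mul_add, mul_le_mul_iff_right₀ ha] at h1
    have hgi : 0 < g i := hgpos i hi
    have e1 : τ * σ2 / g i * (Real.exp (L * d i) - 1)
        = τ * σ2 / g i * Real.exp (L * d i) - τ * σ2 / g i := by ring
    have e2 : τ * σ2 / g i * (Real.exp (L * y) - 1)
        = τ * σ2 / g i * Real.exp (L * y) - τ * σ2 / g i := by ring
    rw [e1, e2] at h1
    linarith
  have hmarg1 : ∀ i ∈ Finset.Icc 1 N,
      3 * c * (ℓ i) ^ 2 ≤ τ * σ2 / g i * L * Real.exp (L * d i) := by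
    intro i hi
    exact slotCi c (τ * σ2 / g i) L (ℓ i) (d i) hc
      (by have := hgpos i hi; positivity) hL (hnn i hi).1 (hnn i hi).2 (key i hi)
  have hmarg2 : ∀ i ∈ Finset.Icc 1 N, 0 < d i →
      τ * σ2 / g i * L * Real.exp (L * d i) ≤ 3 * c * (ℓ i) ^ 2 := by
    intro i hi hd
    exact slotCii c (τ * σ2 / g i) L (ℓ i) (d i) hc
      (by have := hgpos i hi; positivity) hL (hnn i hi).1 hd (key i hi)
  set ω : ℕ → ℝ := fun i => 3 * c * (ℓ i) ^ 2 / (η * h' i) with hωdef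
  have memN : ∀ i ∈ Finset.Icc 1 (N - 1), i ∈ Finset.Icc 1 N ∧ i + 1 ∈ Finset.Icc 1 N := by
    intro i hi
    rw [Finset.mem_Icc] at hi ⊢
    rw [Finset.mem_Icc]
    omega
  refine ⟨ω, ?_, ?_, ?_⟩
  · -- monotonicity
    intro i hi
    obtain ⟨memi, memi1⟩ := memN i hi
    have ha1 : 0 < η * h' i := by have := hh'pos i memi; positivity
    have ha2 : 0 < η * h' (i + 1) := by have := hh'pos (i + 1) memi1; positivity
    simp only [hωdef]
    by_cases hl : 0 < ℓ i
    · have hkey : ∀ ε : ℝ, 0 ≤ ε → ε ≤ ℓ i →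
          1 / (η * h' i) * (c * (ℓ i) ^ 3) + 1 / (η * h' (i+1)) * (c * (ℓ (i+1)) ^ 3)
            ≤ 1 / (η * h' i) * (c * (ℓ i - ε) ^ 3)
              + 1 / (η * h' (i+1)) * (c * (ℓ (i+1) + ε) ^ 3) := by
        intro ε he hel
        have hps := pshift i hi ε he hel
        rw [hGeq, hGeq, hGeq, hGeq] at hps
        exact hps
      have hsl := shiftlem c (1 / (η * h' i)) (1 / (η * h' (i+1))) (ℓ i) (ℓ (i+1)) (ℓ i)
        hc (by positivity) (by positivity) (hnn (i+1) memi1).1 hl le_rfl hkey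
      have e1 : 3 * c * (ℓ i) ^ 2 / (η * h' i) = 3 * c * (1 / (η * h' i)) * (ℓ i) ^ 2 := by ring
      have e2 : 3 * c * (ℓ (i+1)) ^ 2 / (η * h' (i+1))
          = 3 * c * (1 / (η * h' (i+1))) * (ℓ (i+1)) ^ 2 := by ring
      rw [e1, e2]
      linarith
    · have hl0 : ℓ i = 0 := le_antisymm (not_lt.mp hl) (hnn i memi).1
      rw [hl0]
      have : (0:ℝ) ≤ 3 * c * (ℓ (i+1)) ^ 2 / (η * h' (i+1)) := by positivity
      simpa using this
  · -- closed form
    intro i hi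
    have ha : 0 < η * h' i := by have := hh'pos i hi; positivity
    have hgi : 0 < g i := hgpos i hi
    have hli : 0 ≤ ℓ i := (hnn i hi).1
    constructor
    · simp only [hωdef]
      have hωnn : (0:ℝ) ≤ 3 * c * (ℓ i) ^ 2 / (η * h' i) := by positivity
      rw [max_eq_left hωnn]
      have hval : η * h' i * (3 * c * (ℓ i) ^ 2 / (η * h' i)) / (3 * ζ * C ^ 3)
          = (ℓ i / τ) ^ 2 := by
        rw [hcdef]; field_simp [(hh'pos i hi).ne']
      rw [hval, Real.sqrt_sq (by positivity : (0:ℝ) ≤ ℓ i / τ)]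
      field_simp
    · simp only [hωdef]
      by_cases hd : 0 < d i
      · have h1 := hmarg1 i hi
        have h2 := hmarg2 i hi hd
        have heq : 3 * c * (ℓ i) ^ 2 = τ * σ2 / g i * L * Real.exp (L * d i) :=
          le_antisymm h1 h2
        have ht : 3 * c * (ℓ i) ^ 2 / (η * h' i) * (B * η * h' i * g i) / (σ2 * Real.log 2)
            = Real.exp (L * d i) := by
          rw [heq, hLdef]
          field_simp [(hh'pos i hi).ne']
        rw [ht, max_eq_left (Real.one_le_exp (by positivity)),
          Real.logb, Real.log_exp, hLdef]
        field_simp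
      · have hd0 : d i = 0 := le_antisymm (not_lt.mp hd) (hnn i hi).2
        have h1 := hmarg1 i hi
        rw [hd0, mul_zero, Real.exp_zero, mul_one] at h1
        have ht1 : 3 * c * (ℓ i) ^ 2 / (η * h' i) * (B * η * h' i * g i) / (σ2 * Real.log 2)
            ≤ 1 := by
          rw [div_le_one (by positivity)]
          have expand : 3 * c * (ℓ i) ^ 2 / (η * h' i) * (B * η * h' i * g i)
              = 3 * c * (ℓ i) ^ 2 * (B * g i) := by field_simp [(hh'pos i hi).ne']
          rw [expand]
          have h1' := mul_le_mul_of_nonneg_right h1 (show (0:ℝ) ≤ B * g i by positivity)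
          have e3 : τ * σ2 / g i * L * (B * g i) = σ2 * Real.log 2 := by
            rw [hLdef]; field_simp
          linarith [e3 ▸ h1']
        rw [max_eq_right ht1, Real.logb_one, mul_zero]
        exact hd0
  · -- tightness where ω strictly increases
    intro i hi hlt
    obtain ⟨memi, memi1⟩ := memN i hi
    have ha1 : 0 < η * h' i := by have := hh'pos i memi; positivity
    have ha2 : 0 < η * h' (i + 1) := by have := hh'pos (i + 1) memi1; positivity
    simp only [hωdef] at hlt
    by_contra hne
    have hstrict : ∑ j ∈ Finset.Icc 1 i, (ℓ j + d j) < ∑ j ∈ Finset.Icc 1 i, A j :=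
      lt_of_le_of_ne (hcaus i hi) hne
    have hl2pos : 0 < ℓ (i + 1) := by
      by_contra h0
      push_neg at h0
      have h00 : ℓ (i + 1) = 0 := le_antisymm h0 (hnn (i+1) memi1).1
      rw [h00] at hlt
      have : (0:ℝ) ≤ 3 * c * (ℓ i) ^ 2 / (η * h' i) := by positivity
      norm_num at hlt
      linarith
    set slack : ℝ := ∑ j ∈ Finset.Icc 1 i, A j - ∑ j ∈ Finset.Icc 1 i, (ℓ j + d j)
      with hslackdef
    have hslackpos : 0 < slack := by simp only [hslackdef]; linarith
    have hbndpos : 0 < min (ℓ (i + 1)) slack := lt_min hl2pos hslackpos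
    have hkey : ∀ ε : ℝ, 0 ≤ ε → ε ≤ min (ℓ (i + 1)) slack →
        1 / (η * h' (i+1)) * (c * (ℓ (i+1)) ^ 3) + 1 / (η * h' i) * (c * (ℓ i) ^ 3)
          ≤ 1 / (η * h' (i+1)) * (c * (ℓ (i+1) - ε) ^ 3)
            + 1 / (η * h' i) * (c * (ℓ i + ε) ^ 3) := by
      intro ε he hel
      have hel1 : ε ≤ ℓ (i + 1) := le_trans hel (min_le_left _ _)
      have hel2 : ∑ j ∈ Finset.Icc 1 i, (ℓ j + d j) + ε ≤ ∑ j ∈ Finset.Icc 1 i, A j := by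
        have := le_trans hel (min_le_right _ _)
        simp only [hslackdef] at this
        linarith
      have hpb := pback i hi ε he hel1 hel2
      rw [hGeq, hGeq, hGeq, hGeq] at hpb
      linarith
    have hsl := shiftlem c (1 / (η * h' (i+1))) (1 / (η * h' i)) (ℓ (i+1)) (ℓ i)
      (min (ℓ (i + 1)) slack) hc (by positivity) (by positivity) (hnn i memi).1
      hbndpos (min_le_left _ _) hkey
    have e1 : 3 * c * (ℓ i) ^ 2 / (η * h' i) = 3 * c * (1 / (η * h' i)) * (ℓ i) ^ 2 := by ring
    have e2 : 3 * c * (ℓ (i+1)) ^ 2 / (η * h' (i+1))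
        = 3 * c * (1 / (η * h' (i+1))) * (ℓ (i+1)) ^ 2 := by ring
    rw [e1, e2] at hlt
    linarith
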